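/- If D is a Postnikov diagram of type (k,n) and μ is a perfect matching of the associated bipartite graph Γ(D) (with half-edges), then the boundary value ∂μ ⊆ {1,...,n} has cardinality exactly k. -/

import Mathlib

/-!
STATEMENT 1: If `D` is a Postnikov diagram of type `(k,n)` and `μ` is a perfect matching
of the associated bipartite graph `Γ(D)` (with half-edges), then the boundary value
`∂μ ⊆ {1,…,n}` has cardinality exactly `k`.

We model the bipartite graph `Γ(D)` with half-edges combinatorially: a finite set of
nodes coloured white/black, a finite set of edges each joining a white node to a black
node, and `n` half-edges (labelled by `Fin n`) each attached to a node.
-/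

noncomputable section
open scoped Classical

structure BipartiteGraphWithHalfEdges (n : ℕ) where
  Node : Type
  [fintNode : Fintype Node]
  white : Node → Prop
  Edge : Type
  [fintEdge : Fintype Edge]
  /-- the white endpoint of an edge -/
  wEnd : Edge → Node
  /-- the black endpoint of an edge -/
  bEnd : Edge → Node
  wEnd_white : ∀ e, white (wEnd e)
  bEnd_black : ∀ e, ¬ white (bEnd e)
  /-- the node incident with half-edge `i` -/
  halfNode : Fin n → Node

attribute [instance] BipartiteGraphWithHalfEdges.fintNode BipartiteGraphWithHalfEdges.fintEdge

namespace BipartiteGraphWithHalfEdges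

variable {n : ℕ} (Γ : BipartiteGraphWithHalfEdges n)

/-- A perfect matching: a set `μE` of edges together with a set `μH` of half-edges such
that every node of `Γ` is incident with exactly one element of `μE ∪ μH`. -/
def IsPerfectMatching (μE : Finset Γ.Edge) (μH : Finset (Fin n)) : Prop :=
  ∀ v : Γ.Node,
    ((μE.filter fun e => Γ.wEnd e = v ∨ Γ.bEnd e = v).card
      + (μH.filter fun i => Γ.halfNode i = v).card) = 1

/-- `Γ` has type `(k,n)`, i.e.
`k = #{white nodes} − #{black nodes} + #{half-edges incident with a black node}`
(written without subtraction). -/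
def HasTypeK (k : ℕ) : Prop :=
  Fintype.card {v : Γ.Node // Γ.white v}
      + (Finset.univ.filter fun i : Fin n => ¬ Γ.white (Γ.halfNode i)).card
    = Fintype.card {v : Γ.Node // ¬ Γ.white v} + k

/-- The boundary value `∂μ` of a perfect matching: those labels `i` such that the
half-edge `i` is incident with a white node and lies in `μ`, or is incident with a
black node and does not lie in `μ`. -/
def bval (_μE : Finset Γ.Edge) (μH : Finset (Fin n)) : Finset (Fin n) :=
  Finset.univ.filter fun i =>
    (Γ.white (Γ.halfNode i) ∧ i ∈ μH) ∨ (¬ Γ.white (Γ.halfNode i) ∧ i ∉ μH)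

/-- If `Γ = Γ(D)` has type `(k,n)` then the boundary value of any perfect matching has
cardinality exactly `k`. -/
theorem bval_card {k : ℕ} (hk : Γ.HasTypeK k)
    (μE : Finset Γ.Edge) (μH : Finset (Fin n)) (hμ : Γ.IsPerfectMatching μE μH) :
    (Γ.bval μE μH).card = k := by
  classical
  set Wset : Finset Γ.Node := Finset.univ.filter (fun v => Γ.white v) with hWdef
  set Bset : Finset Γ.Node := Finset.univ.filter (fun v => ¬ Γ.white v) with hBdef
  -- summing the matching condition over white nodes
  have hsumW : μE.card + (μH.filter fun i => Γ.white (Γ.halfNode i)).card = Wset.card := by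
    have h1 : μE.card = ∑ v ∈ Wset, (μE.filter fun e => Γ.wEnd e = v).card :=
      Finset.card_eq_sum_card_fiberwise (fun e _ => by
        simp [hWdef, Γ.wEnd_white e])
    have h2 : (μH.filter fun i => Γ.white (Γ.halfNode i)).card
        = ∑ v ∈ Wset, (μH.filter fun i => Γ.halfNode i = v).card := by
      have := Finset.card_eq_sum_card_fiberwise
        (s := μH.filter fun i => Γ.white (Γ.halfNode i)) (t := Wset)
        (f := fun i => Γ.halfNode i)
        (fun i hi => by
          simp only [Finset.mem_coe, Finset.mem_filter] at hi
          simp [hWdef, hi.2])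
      rw [this]
      refine Finset.sum_congr rfl fun v hv => ?_
      simp only [hWdef, Finset.mem_filter, Finset.mem_univ, true_and] at hv
      congr 1
      ext i
      simp only [Finset.mem_filter]
      constructor
      · rintro ⟨⟨h1, _⟩, h2⟩; exact ⟨h1, h2⟩
      · rintro ⟨h1, h2⟩; exact ⟨⟨h1, h2 ▸ hv⟩, h2⟩
    have h3 : ∑ v ∈ Wset, ((μE.filter fun e => Γ.wEnd e = v ∨ Γ.bEnd e = v).card
        + (μH.filter fun i => Γ.halfNode i = v).card) = Wset.card := by
      simp [hμ _]
    rw [h1, h2, ← Finset.sum_add_distrib]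
    rw [← h3]
    refine Finset.sum_congr rfl fun v hv => ?_
    simp only [hWdef, Finset.mem_filter, Finset.mem_univ, true_and] at hv
    congr 2
    ext e
    simp only [Finset.mem_filter]
    constructor
    · rintro ⟨he, h⟩; exact ⟨he, Or.inl h⟩
    · rintro ⟨he, h | h⟩
      · exact ⟨he, h⟩
      · exact absurd (h ▸ hv) (Γ.bEnd_black e)
  -- summing the matching condition over black nodes
  have hsumB : μE.card + (μH.filter fun i => ¬ Γ.white (Γ.halfNode i)).card = Bset.card := by
    have h1 : μE.card = ∑ v ∈ Bset, (μE.filter fun e => Γ.bEnd e = v).card :=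
      Finset.card_eq_sum_card_fiberwise (fun e _ => by
        simp [hBdef, Γ.bEnd_black e])
    have h2 : (μH.filter fun i => ¬ Γ.white (Γ.halfNode i)).card
        = ∑ v ∈ Bset, (μH.filter fun i => Γ.halfNode i = v).card := by
      have := Finset.card_eq_sum_card_fiberwise
        (s := μH.filter fun i => ¬ Γ.white (Γ.halfNode i)) (t := Bset)
        (f := fun i => Γ.halfNode i)
        (fun i hi => by
          simp only [Finset.mem_coe, Finset.mem_filter] at hi
          simp [hBdef, hi.2])
      rw [this]
      refine Finset.sum_congr rfl fun v hv => ?_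
      simp only [hBdef, Finset.mem_filter, Finset.mem_univ, true_and] at hv
      congr 1
      ext i
      simp only [Finset.mem_filter]
      constructor
      · rintro ⟨⟨h1, _⟩, h2⟩; exact ⟨h1, h2⟩
      · rintro ⟨h1, h2⟩; exact ⟨⟨h1, h2 ▸ hv⟩, h2⟩
    have h3 : ∑ v ∈ Bset, ((μE.filter fun e => Γ.wEnd e = v ∨ Γ.bEnd e = v).card
        + (μH.filter fun i => Γ.halfNode i = v).card) = Bset.card := by
      simp [hμ _]
    rw [h1, h2, ← Finset.sum_add_distrib]
    rw [← h3]
    refine Finset.sum_congr rfl fun v hv => ?_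
    simp only [hBdef, Finset.mem_filter, Finset.mem_univ, true_and] at hv
    congr 2
    ext e
    simp only [Finset.mem_filter]
    constructor
    · rintro ⟨he, h⟩; exact ⟨he, Or.inr h⟩
    · rintro ⟨he, h | h⟩
      · exact absurd (h ▸ Γ.wEnd_white e) hv
      · exact ⟨he, h⟩
  -- cardinalities of the node sets
  have hWcard : Wset.card = Fintype.card {v : Γ.Node // Γ.white v} := by
    rw [Fintype.card_subtype]
  have hBcard : Bset.card = Fintype.card {v : Γ.Node // ¬ Γ.white v} := by
    rw [Fintype.card_subtype]
  -- the boundary value splits into two disjoint parts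
  have hbval : (Γ.bval μE μH).card
      = (μH.filter fun i => Γ.white (Γ.halfNode i)).card
        + (Finset.univ.filter fun i : Fin n =>
            ¬ Γ.white (Γ.halfNode i) ∧ i ∉ μH).card := by
    have e1 : (Finset.univ.filter fun i : Fin n => Γ.white (Γ.halfNode i) ∧ i ∈ μH)
        = μH.filter fun i => Γ.white (Γ.halfNode i) := by
      ext i
      simp only [Finset.mem_filter, Finset.mem_univ, true_and]
      tauto
    rw [bval, Finset.filter_or, Finset.card_union_of_disjoint, e1]
    · rw [Finset.disjoint_filter]
      rintro i _ ⟨h1, _⟩ ⟨h2, _⟩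
      exact h2 h1
  -- partition of the black half-edges
  have hpart : (Finset.univ.filter fun i : Fin n =>
        ¬ Γ.white (Γ.halfNode i) ∧ i ∉ μH).card
      + (μH.filter fun i => ¬ Γ.white (Γ.halfNode i)).card
      = (Finset.univ.filter fun i : Fin n => ¬ Γ.white (Γ.halfNode i)).card := by
    have h1 : (Finset.univ.filter fun i : Fin n => ¬ Γ.white (Γ.halfNode i) ∧ i ∉ μH)
        = (Finset.univ.filter fun i : Fin n => ¬ Γ.white (Γ.halfNode i)).filter
            (fun i => i ∉ μH) := by
      rw [Finset.filter_filter]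
    have h2 : (μH.filter fun i => ¬ Γ.white (Γ.halfNode i))
        = (Finset.univ.filter fun i : Fin n => ¬ Γ.white (Γ.halfNode i)).filter
            (fun i => i ∈ μH) := by
      ext i
      simp only [Finset.mem_filter, Finset.mem_univ, true_and]
      tauto
    rw [h1, h2]
    rw [Finset.filter_not]
    exact Finset.card_sdiff_add_card_eq_card (Finset.filter_subset _ _)
  rw [HasTypeK] at hk
  omega

end BipartiteGraphWithHalfEdges

end
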